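/- Every extreme point of the BCC production possibility set T is exposed: if Z is an extreme point of T, then there exists a linear functional f on ℝ^m × ℝ^r such that f(x) < f(Z) for every x ∈ T with x ≠ Z; equivalently, there is a supporting hyperplane through Z having no other common points with T. -/

import Mathlib

open Finset

/-- The BCC production possibility set generated by units with inputs `X j` and outputs `Y j`. -/
def BCC {ι : Type*} [Fintype ι] {m r : ℕ} (X : ι → Fin m → ℝ) (Y : ι → Fin r → ℝ) :
    Set ((Fin m → ℝ) × (Fin r → ℝ)) :=
  {p | ∃ l : ι → ℝ, (∀ j, 0 ≤ l j) ∧ (∑ j, l j = 1) ∧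
    (∀ k, ∑ j, l j * X j k ≤ p.1 k) ∧ (∀ i, p.2 i ≤ ∑ j, l j * Y j i)}

/-- Every extreme point of the BCC production possibility set is exposed: there is a linear
functional `f` with `f x < f Z` for every `x ∈ T` with `x ≠ Z`, i.e. a supporting hyperplane
through `Z` having no other common points with `T`. -/
theorem bcc_extreme_point_is_exposed (m r n : ℕ) (hn : 1 ≤ n)
    (X : Fin n → Fin m → ℝ) (Y : Fin n → Fin r → ℝ)
    (hX : ∀ j k, 0 ≤ X j k) (hY : ∀ j i, 0 ≤ Y j i)
    (Z : (Fin m → ℝ) × (Fin r → ℝ)) (hZ : Z ∈ Set.extremePoints ℝ (BCC X Y)) :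
    ∃ f : ((Fin m → ℝ) × (Fin r → ℝ)) →ₗ[ℝ] ℝ,
      ∀ x ∈ BCC X Y, x ≠ Z → f x < f Z := by
  classical
  set P : Fin n → (Fin m → ℝ) × (Fin r → ℝ) := fun j => (X j, Y j) with hPdef
  set ek : Fin m → (Fin m → ℝ) × (Fin r → ℝ) := fun k => (Pi.single k 1, 0) with hekdef
  set fi : Fin r → (Fin m → ℝ) × (Fin r → ℝ) := fun i => (0, Pi.single i 1) with hfidef
  have hZT : Z ∈ BCC X Y := hZ.1
  -- convexity of the BCC set
  have hTconv : Convex ℝ (BCC X Y) := by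
    rintro p ⟨lp, hlp0, hlp1, hlpX, hlpY⟩ q ⟨lq, hlq0, hlq1, hlqX, hlqY⟩ a b ha hb hab
    refine ⟨fun j => a * lp j + b * lq j, fun j => add_nonneg (mul_nonneg ha (hlp0 j))
      (mul_nonneg hb (hlq0 j)), ?_, ?_, ?_⟩
    · rw [Finset.sum_add_distrib, ← Finset.mul_sum, ← Finset.mul_sum, hlp1, hlq1]
      simpa using hab
    · intro k
      have h1 : ∑ j, (a * lp j + b * lq j) * X j k
          = a * ∑ j, lp j * X j k + b * ∑ j, lq j * X j k := by
        rw [Finset.mul_sum, Finset.mul_sum, ← Finset.sum_add_distrib]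
        exact Finset.sum_congr rfl fun j _ => by ring
      have h2 : (a • p + b • q).1 k = a * p.1 k + b * q.1 k := by
        simp [Prod.fst_add, Prod.smul_fst]
      rw [h1, h2]
      exact add_le_add (mul_le_mul_of_nonneg_left (hlpX k) ha)
        (mul_le_mul_of_nonneg_left (hlqX k) hb)
    · intro i
      have h1 : ∑ j, (a * lp j + b * lq j) * Y j i
          = a * ∑ j, lp j * Y j i + b * ∑ j, lq j * Y j i := by
        rw [Finset.mul_sum, Finset.mul_sum, ← Finset.sum_add_distrib]
        exact Finset.sum_congr rfl fun j _ => by ring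
      have h2 : (a • p + b • q).2 i = a * p.2 i + b * q.2 i := by
        simp [Prod.snd_add, Prod.smul_snd]
      rw [h1, h2]
      exact add_le_add (mul_le_mul_of_nonneg_left (hlpY i) ha)
        (mul_le_mul_of_nonneg_left (hlqY i) hb)
  -- monotonicity of the BCC set
  have hmono : ∀ w w' : (Fin m → ℝ) × (Fin r → ℝ), w ∈ BCC X Y →
      (∀ k, w.1 k ≤ w'.1 k) → (∀ i, w'.2 i ≤ w.2 i) → w' ∈ BCC X Y := by
    rintro w w' ⟨l, h0, h1, hXl, hYl⟩ h2 h3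
    exact ⟨l, h0, h1, fun k => (hXl k).trans (h2 k), fun i => (h3 i).trans (hYl i)⟩
  -- each production unit belongs to T
  have hPT : ∀ j, P j ∈ BCC X Y := by
    intro j
    refine ⟨fun j' => if j' = j then 1 else 0, fun j' => by positivity, by simp, ?_, ?_⟩
    · intro k; simp [ite_mul, hPdef]
    · intro i; simp [ite_mul, hPdef]
  have hZek : ∀ k, Z + ek k ∈ BCC X Y := by
    intro k
    refine hmono Z _ hZT (fun k' => ?_) (fun i => ?_)
    · have : (0:ℝ) ≤ (Pi.single k 1 : Fin m → ℝ) k' := by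
        rw [Pi.single_apply]
        split <;> norm_num
      have hgoal : (Z + ek k).1 k' = Z.1 k' + (Pi.single k 1 : Fin m → ℝ) k' := by simp [hekdef]
      rw [hgoal]
      exact le_add_of_nonneg_right this
    · simp [hekdef]
  have hZfi : ∀ i, Z - fi i ∈ BCC X Y := by
    intro i
    refine hmono Z _ hZT (fun k => ?_) (fun i' => ?_)
    · simp [hfidef]
    · have : (0:ℝ) ≤ (Pi.single i 1 : Fin r → ℝ) i' := by
        rw [Pi.single_apply]
        split <;> norm_num
      have hgoal : (Z - fi i).2 i' = Z.2 i' - (Pi.single i 1 : Fin r → ℝ) i' := by simp [hfidef]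
      rw [hgoal]
      exact sub_le_self _ this
  have hekne : ∀ k, Z + ek k ≠ Z := by
    intro k h
    have := congrArg (fun w => w.1 k) h
    simp [hekdef, Pi.single_eq_same] at this
  have hfine : ∀ i, Z - fi i ≠ Z := by
    intro i h
    have := congrArg (fun w => w.2 i) h
    simp [hfidef, Pi.single_eq_same, sub_eq_self] at this
  -- the finite set we separate from Z
  set Q : Set ((Fin m → ℝ) × (Fin r → ℝ)) :=
    ((Set.range P ∪ Set.range (fun k => Z + ek k)) ∪ Set.range (fun i => Z - fi i)) \ {Z}
    with hQdef
  have hQfin : Q.Finite :=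
    (((Set.finite_range P).union (Set.finite_range _)).union (Set.finite_range _)).diff
  have hQsub : Q ⊆ BCC X Y \ {Z} := by
    rintro q ⟨hq, hne⟩
    refine ⟨?_, hne⟩
    rcases hq with (⟨j, rfl⟩ | ⟨k, rfl⟩) | ⟨i, rfl⟩
    · exact hPT j
    · exact hZek k
    · exact hZfi i
  have hZQ : Z ∉ convexHull ℝ Q := by
    have hZd : Z ∉ convexHull ℝ (BCC X Y \ {Z}) :=
      ((hTconv.mem_extremePoints_iff_mem_diff_convexHull_diff).1 hZ).2
    exact fun h => hZd (convexHull_mono hQsub h)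
  obtain ⟨f0, u, hsep, huZ⟩ := geometric_hahn_banach_closed_point
    (convex_convexHull ℝ Q) (hQfin.isClosed_convexHull ℝ) hZQ
  have key : ∀ q ∈ Q, f0 q < f0 Z := fun q hq =>
    (hsep q (subset_convexHull ℝ Q hq)).trans huZ
  have hekneg : ∀ k, f0 (ek k) < 0 := by
    intro k
    have h1 : Z + ek k ∈ Q :=
      ⟨Or.inl (Or.inr ⟨k, rfl⟩), fun h => hekne k h⟩
    have := key _ h1
    rw [map_add] at this
    linarith
  have hfipos : ∀ i, 0 < f0 (fi i) := by
    intro i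
    have h1 : Z - fi i ∈ Q :=
      ⟨Or.inr ⟨i, rfl⟩, fun h => hfine i h⟩
    have := key _ h1
    rw [map_sub] at this
    linarith
  have hPlt : ∀ j, P j ≠ Z → f0 (P j) < f0 Z := by
    intro j h
    exact key _ ⟨Or.inl (Or.inl ⟨j, rfl⟩), h⟩
  have hPle : ∀ j, f0 (P j) ≤ f0 Z := by
    intro j
    rcases eq_or_ne (P j) Z with h | h
    · rw [h]
    · exact (hPlt j h).le
  refine ⟨f0.toLinearMap, ?_⟩
  rintro x ⟨l, hl0, hl1, hlX, hlY⟩ hxZ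
  simp only [ContinuousLinearMap.coe_coe]
  set s : Fin m → ℝ := fun k => x.1 k - ∑ j, l j * X j k with hsdef
  set t : Fin r → ℝ := fun i => (∑ j, l j * Y j i) - x.2 i with htdef
  have hs0 : ∀ k, 0 ≤ s k := fun k => sub_nonneg.2 (hlX k)
  have ht0 : ∀ i, 0 ≤ t i := fun i => sub_nonneg.2 (hlY i)
  have hxdec : x = (∑ j, l j • P j) + (∑ k, s k • ek k) - (∑ i, t i • fi i) := by
    have h1 : x.1 = ((∑ j, l j • P j) + (∑ k, s k • ek k) - (∑ i, t i • fi i)).1 := by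
      funext k
      have e1 : ((∑ j, l j • P j) : (Fin m → ℝ) × (Fin r → ℝ)).1 k
          = ∑ j, l j * X j k := by
        rw [Prod.fst_sum]
        simp [hPdef]
      have e2 : ((∑ k', s k' • ek k') : (Fin m → ℝ) × (Fin r → ℝ)).1 k = s k := by
        rw [Prod.fst_sum]
        simp [hekdef, Pi.single_apply]
      have e3 : ((∑ i, t i • fi i) : (Fin m → ℝ) × (Fin r → ℝ)).1 k = 0 := by
        rw [Prod.fst_sum]
        simp [hfidef]
      simp only [Prod.fst_sub, Prod.fst_add, Pi.sub_apply, Pi.add_apply]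
      rw [e1, e2, e3, hsdef]
      ring
    have h2 : x.2 = ((∑ j, l j • P j) + (∑ k, s k • ek k) - (∑ i, t i • fi i)).2 := by
      funext i
      have e1 : ((∑ j, l j • P j) : (Fin m → ℝ) × (Fin r → ℝ)).2 i
          = ∑ j, l j * Y j i := by
        rw [Prod.snd_sum]
        simp [hPdef]
      have e2 : ((∑ k', s k' • ek k') : (Fin m → ℝ) × (Fin r → ℝ)).2 i = 0 := by
        rw [Prod.snd_sum]
        simp [hekdef]
      have e3 : ((∑ i', t i' • fi i') : (Fin m → ℝ) × (Fin r → ℝ)).2 i = t i := by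
        rw [Prod.snd_sum]
        simp [hfidef, Pi.single_apply]
      simp only [Prod.snd_sub, Prod.snd_add, Pi.sub_apply, Pi.add_apply]
      rw [e1, e2, e3, htdef]
      ring
    exact Prod.ext h1 h2
  have hfx : f0 x = (∑ j, l j * f0 (P j)) + (∑ k, s k * f0 (ek k))
      - (∑ i, t i * f0 (fi i)) := by
    rw [hxdec]
    simp [map_sub, map_add, map_sum, smul_eq_mul]
  have hA : ∑ j, l j * f0 (P j) ≤ f0 Z := by
    calc ∑ j, l j * f0 (P j) ≤ ∑ j, l j * f0 Z :=
          Finset.sum_le_sum fun j _ => mul_le_mul_of_nonneg_left (hPle j) (hl0 j)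
      _ = f0 Z := by rw [← Finset.sum_mul, hl1, one_mul]
  have hB : ∑ k, s k * f0 (ek k) ≤ 0 :=
    Finset.sum_nonpos fun k _ => mul_nonpos_of_nonneg_of_nonpos (hs0 k) (hekneg k).le
  have hC : 0 ≤ ∑ i, t i * f0 (fi i) :=
    Finset.sum_nonneg fun i _ => mul_nonneg (ht0 i) (hfipos i).le
  by_cases hs : ∀ k, s k = 0
  · by_cases ht : ∀ i, t i = 0
    · by_cases hl : ∀ j, l j = 0 ∨ P j = Z
      · exfalso
        apply hxZ
        have hsum0 : (∑ k, s k • ek k) = 0 := Finset.sum_eq_zero fun k _ => by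
          rw [hs k, zero_smul]
        have htum0 : (∑ i, t i • fi i) = 0 := Finset.sum_eq_zero fun i _ => by
          rw [ht i, zero_smul]
        have : ∀ j, l j • P j = l j • Z := by
          intro j
          rcases hl j with h | h
          · rw [h, zero_smul, zero_smul]
          · rw [h]
        rw [hxdec, hsum0, htum0, add_zero, sub_zero, Finset.sum_congr rfl fun j _ => this j,
          ← Finset.sum_smul, hl1, one_smul]
      · push_neg at hl
        obtain ⟨j0, hj0l, hj0P⟩ := hl
        have hA' : ∑ j, l j * f0 (P j) < f0 Z := by
          have h1 : ∑ j, l j * f0 (P j) < ∑ j, l j * f0 Z :=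
            Finset.sum_lt_sum
              (fun j _ => mul_le_mul_of_nonneg_left (hPle j) (hl0 j))
              ⟨j0, Finset.mem_univ _, mul_lt_mul_of_pos_left (hPlt j0 hj0P)
                (lt_of_le_of_ne (hl0 j0) (Ne.symm hj0l))⟩
          calc ∑ j, l j * f0 (P j) < ∑ j, l j * f0 Z := h1
            _ = f0 Z := by rw [← Finset.sum_mul, hl1, one_mul]
        linarith [hfx]
    · push_neg at ht
      obtain ⟨i0, hi0⟩ := ht
      have hC' : 0 < ∑ i, t i * f0 (fi i) :=
        Finset.sum_pos' (fun i _ => mul_nonneg (ht0 i) (hfipos i).le)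
          ⟨i0, Finset.mem_univ _,
            mul_pos (lt_of_le_of_ne (ht0 i0) (Ne.symm hi0)) (hfipos i0)⟩
      linarith [hfx]
  · push_neg at hs
    obtain ⟨k0, hk0⟩ := hs
    have hB' : ∑ k, s k * f0 (ek k) < 0 := by
      have h1 : ∑ k, s k * f0 (ek k) < ∑ _k : Fin m, (0:ℝ) :=
        Finset.sum_lt_sum
          (fun k _ => mul_nonpos_of_nonneg_of_nonpos (hs0 k) (hekneg k).le)
          ⟨k0, Finset.mem_univ _,
            mul_neg_of_pos_of_neg (lt_of_le_of_ne (hs0 k0) (Ne.symm hk0)) (hekneg k0)⟩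
      simpa using h1
    linarith [hfx]
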